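/- Every bipartite graph admits a forest storyplan: there is a bijection τ : V → [n] such that for every step i, the subgraph induced by the vertices visible at step i is a forest. Concretely, if V = A ∪ B is a bipartition, ordering all of A first and then the vertices of B one by one works, since at each step at most one vertex of B is visible. -/

import Mathlib

/-- `H` is a minor of `G`: disjoint connected branch sets, one per vertex of `H`,
with an edge of `G` between branch sets of adjacent vertices of `H`. -/
def SimpleGraph.IsMinorOf {W V : Type*} (H : SimpleGraph W) (G : SimpleGraph V) : Prop :=
  ∃ f : W → Set V,
    (∀ w, (G.induce (f w)).Connected) ∧
    (∀ w₁ w₂, w₁ ≠ w₂ → Disjoint (f w₁) (f w₂)) ∧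
    (∀ w₁ w₂, H.Adj w₁ w₂ → ∃ a ∈ f w₁, ∃ b ∈ f w₂, G.Adj a b)

/-- Planarity via Wagner's theorem: no `K₅` minor and no `K₃,₃` minor. -/
def SimpleGraph.IsPlanar {V : Type*} (G : SimpleGraph V) : Prop :=
  ¬ (completeGraph (Fin 5)).IsMinorOf G ∧
  ¬ (completeBipartiteGraph (Fin 3) (Fin 3)).IsMinorOf G

/-- Outerplanarity: no `K₄` minor and no `K₂,₃` minor. -/
def SimpleGraph.IsOuterplanar {V : Type*} (G : SimpleGraph V) : Prop :=
  ¬ (completeGraph (Fin 4)).IsMinorOf G ∧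
  ¬ (completeBipartiteGraph (Fin 2) (Fin 3)).IsMinorOf G

/-- Vertex `v` is visible at step `i`: `τ v ≤ i ≤ max_{u ∈ N[v]} τ u`. -/
def visibleAt {V : Type*} {n : ℕ} (G : SimpleGraph V) (τ : V ≃ Fin n) (v : V) (i : Fin n) :
    Prop :=
  τ v ≤ i ∧ ∃ u, (u = v ∨ G.Adj v u) ∧ i ≤ τ u

/-- The `i`-th frame: the subgraph induced by the vertices visible at step `i`. -/
def frame {V : Type*} {n : ℕ} (G : SimpleGraph V) (τ : V ≃ Fin n) (i : Fin n) :
    SimpleGraph {v : V // visibleAt G τ v i} :=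
  G.induce {v | visibleAt G τ v i}

def IsForestStoryplan {V : Type*} {n : ℕ} (G : SimpleGraph V) (τ : V ≃ Fin n) : Prop :=
  ∀ i : Fin n, (frame G τ i).IsAcyclic

def IsOuterplanarStoryplan {V : Type*} {n : ℕ} (G : SimpleGraph V) (τ : V ≃ Fin n) : Prop :=
  ∀ i : Fin n, (frame G τ i).IsOuterplanar

def IsPlanarStoryplan {V : Type*} {n : ℕ} (G : SimpleGraph V) (τ : V ≃ Fin n) : Prop :=
  ∀ i : Fin n, (frame G τ i).IsPlanar

lemma star_acyclic {V : Type*} {G : SimpleGraph V} (b : V)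
    (h : ∀ ⦃x y : V⦄, G.Adj x y → x = b ∨ y = b) : G.IsAcyclic := by
  classical
  intro v p hp
  -- b is in the support
  have hb : b ∈ p.support := by
    cases p with
    | nil => exact absurd rfl hp.ne_nil
    | cons hadj p' =>
      rcases h hadj with rfl | rfl
      · exact SimpleGraph.Walk.start_mem_support _
      · simp [SimpleGraph.Walk.support_cons, SimpleGraph.Walk.start_mem_support]
  have hq : (p.rotate b hb).IsCycle := hp.rotate hb
  set q := p.rotate b hb with hqdef
  clear_value q
  cases q with
  | nil => exact absurd rfl hq.ne_nil
  | cons h1 q1 =>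
    cases q1 with
    | nil => have := hq.three_le_length; simp at this
    | cons h2 q2 =>
      rcases h h2 with rfl | rfl
      · exact h1.ne rfl
      · have hnd := hq.support_nodup
        simp only [SimpleGraph.Walk.support_cons] at hnd
        cases q2 with
        | nil => have := hq.three_le_length; simp at this
        | cons h3 q3 =>
          simp only [SimpleGraph.Walk.support_cons, List.tail_cons, List.nodup_cons,
            List.mem_cons] at hnd
          exact hnd.2.1 (SimpleGraph.Walk.end_mem_support q3)

/-- Every bipartite graph admits a forest storyplan. -/
theorem stmt_4 {V : Type*} [Fintype V] (G : SimpleGraph V) (h : G.Colorable 2) :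
    ∃ τ : V ≃ Fin (Fintype.card V), IsForestStoryplan G τ := by
  classical
  obtain ⟨c⟩ := h
  set p : V → Prop := fun v => c v = 0 with hp
  have hcard : Fintype.card {v // p v} + Fintype.card {v // ¬ p v} = Fintype.card V := by
    rw [← Fintype.card_sum]
    exact Fintype.card_congr (Equiv.sumCompl p)
  set kA := Fintype.card {v // p v} with hkA
  set τ : V ≃ Fin (Fintype.card V) :=
    (Equiv.sumCompl p).symm.trans
      (((Fintype.equivFin {v // p v}).sumCongr (Fintype.equivFin {v // ¬ p v})).trans
        (finSumFinEquiv.trans (finCongr hcard))) with hτ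
  have hA : ∀ a, p a → (τ a : ℕ) < kA := by
    intro a ha
    simp only [hτ, Equiv.trans_apply, Equiv.sumCompl_symm_apply_of_pos ha,
      Equiv.sumCongr_apply, Sum.map_inl, finSumFinEquiv_apply_left, finCongr_apply,
      Fin.coe_cast, Fin.coe_castAdd]
    exact (Fintype.equivFin {v // p v} ⟨a, ha⟩).isLt
  have hB : ∀ b, ¬ p b → kA ≤ (τ b : ℕ) := by
    intro b hb
    simp only [hτ, Equiv.trans_apply, Equiv.sumCompl_symm_apply_of_neg hb,
      Equiv.sumCongr_apply, Sum.map_inr, finSumFinEquiv_apply_right, finCongr_apply,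
      Fin.coe_cast, Fin.coe_natAdd]
    omega
  refine ⟨τ, fun i => ?_⟩
  -- a visible vertex with color ≠ 0 must have τ v = i
  have key : ∀ v : V, visibleAt G τ v i → ¬ p v → τ v = i := by
    rintro v ⟨hvi, u, hu, hiu⟩ hv
    rcases hu with rfl | hadj
    · exact le_antisymm hvi hiu
    · exfalso
      have hcu : p u := by
        have := c.valid hadj
        simp only [hp] at hv ⊢
        omega
      have h1 : (τ u : ℕ) < kA := hA u hcu
      have h2 : kA ≤ (τ v : ℕ) := hB v hv
      have : (i : ℕ) ≤ (τ u : ℕ) := hiu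
      have : (τ v : ℕ) ≤ (i : ℕ) := hvi
      omega
  by_cases hex : ∃ b : {v : V // visibleAt G τ v i}, ¬ p b.1
  · obtain ⟨b, hb⟩ := hex
    refine star_acyclic b ?_
    rintro ⟨x, hx⟩ ⟨y, hy⟩ hadj
    have hadj' : G.Adj x y := hadj
    have hxy : c x ≠ c y := c.valid hadj'
    have hτb : τ b.1 = i := key b.1 b.2 hb
    rcases eq_or_ne (c x) 0 with h0 | h0
    · -- then ¬ p y
      have hy' : ¬ p y := by simp only [hp]; intro h'; exact hxy (h0.trans h'.symm)
      right
      have := key y hy hy'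
      have : y = b.1 := τ.injective (this.trans hτb.symm)
      exact Subtype.ext this
    · left
      have := key x hx h0
      have : x = b.1 := τ.injective (this.trans hτb.symm)
      exact Subtype.ext this
  · -- no visible vertex of color 1: no edges at all
    push_neg at hex
    intro v q hq
    cases q with
    | nil => exact absurd rfl hq.ne_nil
    | cons hadj q' =>
      rename_i w
      have hadj' : G.Adj v.1 w.1 := hadj
      have := c.valid hadj'
      have h1 := hex v
      have h2 := hex w
      simp only [hp] at h1 h2
      exact this (h1.trans h2.symm)
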